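/- arXiv:1606.08303 — 4 statements merged into one kernel-verified Lean document; each statement's English description precedes it below -/
import Mathlib

section
/- The map φ ↦ (d10·sin φ, d20·sin(φ + α)), for φ ∈ [0, 2π), is a bijective parametrization of the ellipse E = {τ ∈ ℝ² : a(τ) = 0}, where a(τ) = ‖τ₂·d10 − τ₁·d20‖² − (d10 ∧ d20)², α is the angle between the vectors d10 = m1 − m0 and d20 = m2 − m0, d10 = ‖d10‖, d20 = ‖d20‖, and it is assumed that d10 ∧ d20 > 0. -/
open Real

lemma ellipse_param_aux (D1 D2 α : ℝ) (hD1 : 0 < D1) (hD2 : 0 < D2)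
    (hα : α ∈ Set.Ioo 0 π) :
    Set.BijOn (fun φ => (D1 * Real.sin φ, D2 * Real.sin (φ + α)))
      (Set.Ico 0 (2 * π))
      {τ : ℝ × ℝ | τ.2 ^ 2 * D1 ^ 2 - 2 * τ.1 * τ.2 * (D1 * D2 * Real.cos α)
        + τ.1 ^ 2 * D2 ^ 2 - (D1 * D2 * Real.sin α) ^ 2 = 0} := by
  have hsinα : 0 < Real.sin α := Real.sin_pos_of_pos_of_lt_pi hα.1 hα.2
  have hsα : Real.sin α ≠ 0 := ne_of_gt hsinα
  refine ⟨?_, ?_, ?_⟩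
  · -- MapsTo
    intro φ _
    simp only [Set.mem_setOf_eq, Real.sin_add]
    have h1 := Real.sin_sq_add_cos_sq φ
    have h2 := Real.sin_sq_add_cos_sq α
    linear_combination (D1 ^ 2 * D2 ^ 2 * Real.sin α ^ 2) * h1
      - (D1 ^ 2 * D2 ^ 2 * Real.sin φ ^ 2) * h2
  · -- InjOn
    intro φ hφ ψ hψ h
    simp only [Prod.mk.injEq] at h
    have hs : Real.sin φ = Real.sin ψ := mul_left_cancel₀ (ne_of_gt hD1) h.1
    have hs2 : Real.sin (φ + α) = Real.sin (ψ + α) := mul_left_cancel₀ (ne_of_gt hD2) h.2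
    rw [Real.sin_add, Real.sin_add, hs] at hs2
    have hc : Real.cos φ = Real.cos ψ := by
      have := mul_right_cancel₀ hsα (by linarith : Real.cos φ * Real.sin α = Real.cos ψ * Real.sin α)
      exact this
    have hcos1 : Real.cos (φ - ψ) = 1 := by
      rw [Real.cos_sub, hs, hc]
      linear_combination Real.sin_sq_add_cos_sq ψ
    have h1 : -(2 * π) < φ - ψ := by
      obtain ⟨h0, h2⟩ := hφ; obtain ⟨h0', h2'⟩ := hψ; linarith
    have h2 : φ - ψ < 2 * π := by
      obtain ⟨h0, h2⟩ := hφ; obtain ⟨h0', h2'⟩ := hψ; linarith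
    have := (Real.cos_eq_one_iff_of_lt_of_lt h1 h2).mp hcos1
    linarith
  · -- SurjOn
    have hD1' : D1 ≠ 0 := ne_of_gt hD1
    have hD2' : D2 ≠ 0 := ne_of_gt hD2
    intro τ hτ
    simp only [Set.mem_setOf_eq] at hτ
    set x := τ.1 with hx
    set y := τ.2 with hy
    set s : ℝ := x / D1 with hsdef
    set t : ℝ := y / D2 with htdef
    set c : ℝ := (t - s * Real.cos α) / Real.sin α with hcdef
    have h1 : t ^ 2 + s ^ 2 - 2 * s * t * Real.cos α = Real.sin α ^ 2 := by
      rw [hsdef, htdef]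
      field_simp
      linear_combination hτ
    have hcs : s ^ 2 + c ^ 2 = 1 := by
      rw [hcdef]
      field_simp
      linear_combination h1 + s ^ 2 * Real.sin_sq_add_cos_sq α
    have hc1 : -1 ≤ c := by nlinarith [sq_nonneg s]
    have hc2 : c ≤ 1 := by nlinarith [sq_nonneg s]
    have hcosφ : Real.cos (Real.arccos c) = c := Real.cos_arccos hc1 hc2
    have hsinφ : Real.sin (Real.arccos c) = |s| := by
      rw [Real.sin_arccos]
      rw [show (1 : ℝ) - c ^ 2 = s ^ 2 by linarith]
      exact Real.sqrt_sq_eq_abs s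
    have himage : ∀ φ : ℝ, Real.cos φ = c → Real.sin φ = s →
        (D1 * Real.sin φ, D2 * Real.sin (φ + α)) = τ := by
      intro φ hcφ hsφ
      have e1 : D1 * Real.sin φ = x := by
        rw [hsφ, hsdef]; field_simp
      have e2 : D2 * Real.sin (φ + α) = y := by
        have hc' : c * Real.sin α = t - s * Real.cos α := by
          rw [hcdef]; field_simp
        have ht' : s * Real.cos α + c * Real.sin α = t := by rw [hc']; ring
        rw [Real.sin_add, hcφ, hsφ, ht', htdef]
        field_simp
      rw [e1, e2]
    rcases le_or_gt 0 s with hspos | hsneg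
    · refine ⟨Real.arccos c, ⟨Real.arccos_nonneg c, ?_⟩, ?_⟩
      · have := Real.arccos_le_pi c
        linarith [Real.pi_pos]
      · exact himage _ hcosφ (by rw [hsinφ, abs_of_nonneg hspos])
    · have harc0 : 0 < Real.arccos c := by
        rcases (Real.arccos_nonneg c).lt_or_eq with h | h
        · exact h
        · exfalso
          have : Real.sin (Real.arccos c) = 0 := by rw [← h]; simp
          rw [hsinφ] at this
          have := abs_eq_zero.mp this
          linarith
      refine ⟨2 * π - Real.arccos c, ⟨?_, ?_⟩, ?_⟩
      · have := Real.arccos_le_pi c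
        linarith [Real.pi_pos]
      · linarith
      · refine himage _ ?_ ?_
        · rw [Real.cos_two_pi_sub, hcosφ]
        · rw [Real.sin_two_pi_sub, hsinφ, abs_of_neg hsneg]; ring

/-- The map φ ↦ (d10 sin φ, d20 sin(φ+α)), φ ∈ [0, 2π), is a bijective
parametrization of the ellipse E = {τ : a(τ) = 0}. -/
theorem ellipse_parametrization (m0 m1 m2 : EuclideanSpace ℝ (Fin 2)) (α : ℝ)
    (hcr : (m1 - m0) 0 * (m2 - m0) 1 - (m1 - m0) 1 * (m2 - m0) 0 > 0)
    (hα : α ∈ Set.Ioo 0 π)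
    (hcos : Real.cos α = (inner ℝ (m1 - m0) (m2 - m0) : ℝ) / (‖m1 - m0‖ * ‖m2 - m0‖))
    (hsin : Real.sin α =
      ((m1 - m0) 0 * (m2 - m0) 1 - (m1 - m0) 1 * (m2 - m0) 0) / (‖m1 - m0‖ * ‖m2 - m0‖)) :
    Set.BijOn (fun φ => (‖m1 - m0‖ * Real.sin φ, ‖m2 - m0‖ * Real.sin (φ + α)))
      (Set.Ico 0 (2 * π))
      {τ : ℝ × ℝ | ‖τ.2 • (m1 - m0) - τ.1 • (m2 - m0)‖ ^ 2 -
        ((m1 - m0) 0 * (m2 - m0) 1 - (m1 - m0) 1 * (m2 - m0) 0) ^ 2 = 0} := by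
  have hd10 : m1 - m0 ≠ 0 := by
    intro h; rw [h] at hcr; simp at hcr
  have hd20 : m2 - m0 ≠ 0 := by
    intro h; rw [h] at hcr; simp at hcr
  have hD1 : 0 < ‖m1 - m0‖ := norm_pos_iff.mpr hd10
  have hD2 : 0 < ‖m2 - m0‖ := norm_pos_iff.mpr hd20
  have hD12 : ‖m1 - m0‖ * ‖m2 - m0‖ ≠ 0 := by positivity
  have hip : (inner ℝ (m1 - m0) (m2 - m0) : ℝ)
      = ‖m1 - m0‖ * ‖m2 - m0‖ * Real.cos α := by
    rw [hcos]; field_simp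
  have hcross : (m1 - m0) 0 * (m2 - m0) 1 - (m1 - m0) 1 * (m2 - m0) 0
      = ‖m1 - m0‖ * ‖m2 - m0‖ * Real.sin α := by
    rw [hsin]; field_simp
  have hset : {τ : ℝ × ℝ | ‖τ.2 • (m1 - m0) - τ.1 • (m2 - m0)‖ ^ 2 -
        ((m1 - m0) 0 * (m2 - m0) 1 - (m1 - m0) 1 * (m2 - m0) 0) ^ 2 = 0}
      = {τ : ℝ × ℝ | τ.2 ^ 2 * ‖m1 - m0‖ ^ 2
          - 2 * τ.1 * τ.2 * (‖m1 - m0‖ * ‖m2 - m0‖ * Real.cos α)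
          + τ.1 ^ 2 * ‖m2 - m0‖ ^ 2
          - (‖m1 - m0‖ * ‖m2 - m0‖ * Real.sin α) ^ 2 = 0} := by
    ext τ
    simp only [Set.mem_setOf_eq]
    rw [norm_sub_sq_real, norm_smul, norm_smul, real_inner_smul_left,
      real_inner_smul_right, hip, hcross, mul_pow, mul_pow,
      Real.norm_eq_abs, Real.norm_eq_abs, sq_abs, sq_abs]
    constructor <;> intro h <;> linear_combination h
  rw [hset]
  exact ellipse_param_aux _ _ _ hD1 hD2 hα
end

section
/- The ellipse E defined by a(τ) = 0 is tangent to each of the six lines supporting the facets of the polytope P2; in particular, every point of E satisfies the (non-strict) triangle inequalities defining P2, i.e., E ⊆ P2. -/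
private lemma normsq2 (x : EuclideanSpace ℝ (Fin 2)) : ‖x‖ ^ 2 = (x 0) ^ 2 + (x 1) ^ 2 := by
  rw [EuclideanSpace.norm_eq, Real.sq_sqrt (by positivity)]
  simp [Fin.sum_univ_two, sq_abs]

private lemma abs_le_of_sq2 (x d : ℝ) (hd : 0 ≤ d) (h : x ^ 2 ≤ d ^ 2) : |x| ≤ d := by
  rw [← Real.sqrt_sq_eq_abs, ← Real.sqrt_sq hd]
  exact Real.sqrt_le_sqrt h

private lemma vec_ext (x y : EuclideanSpace ℝ (Fin 2)) (h0 : x 0 = y 0) (h1 : x 1 = y 1) :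
    x = y := by
  ext i; fin_cases i
  · exact h0
  · exact h1

private lemma tangent_gen (A B C α β e : ℝ) (hD : 0 < A * B - C ^ 2) (he0 : e ≠ 0)
    (he2 : e ^ 2 = α ^ 2 * A + 2 * α * β * C + β ^ 2 * B) :
    ∃! t : ℝ × ℝ, (B * t.1 ^ 2 - 2 * C * t.1 * t.2 + A * t.2 ^ 2 = A * B - C ^ 2) ∧
      α * t.1 + β * t.2 = e := by
  refine ⟨((α * A + β * C) / e, (α * C + β * B) / e), ⟨?_, ?_⟩, ?_⟩
  · field_simp
    linear_combination (-(A * B - C ^ 2)) * he2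
  · field_simp
    linear_combination -he2
  · rintro ⟨x1, x2⟩ ⟨heq, hl⟩
    have hcross : (x1 * (α * C + β * B) - x2 * (α * A + β * C)) ^ 2 = 0 := by
      linear_combination (α ^ 2 * A + 2 * α * β * C + β ^ 2 * B) * heq -
        (A * B - C ^ 2) * he2 - (A * B - C ^ 2) * (α * x1 + β * x2 + e) * hl
    have h2 : x1 * (α * C + β * B) - x2 * (α * A + β * C) = 0 := sq_eq_zero_iff.mp hcross
    have hx1 : x1 = (α * A + β * C) / e := by
      rw [eq_div_iff he0]
      apply mul_right_cancel₀ he0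
      linear_combination x1 * he2 + (α * A + β * C) * hl + β * h2
    have hx2 : x2 = (α * C + β * B) / e := by
      rw [eq_div_iff he0]
      apply mul_right_cancel₀ he0
      linear_combination x2 * he2 + (α * C + β * B) * hl - α * h2
    simp only [Prod.mk.injEq]
    exact ⟨hx1, hx2⟩

private lemma noncollinear_det (m0 m1 m2 : EuclideanSpace ℝ (Fin 2))
    (h : ¬ Collinear ℝ ({m0, m1, m2} : Set (EuclideanSpace ℝ (Fin 2)))) :
    (m1 - m0) 0 * (m2 - m0) 1 - (m1 - m0) 1 * (m2 - m0) 0 ≠ 0 := by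
  intro hD
  apply h
  rw [collinear_iff_of_mem (show m0 ∈ ({m0, m1, m2} : Set (EuclideanSpace ℝ (Fin 2))) by simp)]
  set p : ℝ := (m1 - m0) 0 with hp
  set q : ℝ := (m1 - m0) 1 with hq
  set r : ℝ := (m2 - m0) 0 with hr
  set s : ℝ := (m2 - m0) 1 with hs
  by_cases hu : p = 0 ∧ q = 0
  · refine ⟨m2 - m0, ?_⟩
    have hm1 : m1 = m0 := by
      have h1 : m1 - m0 = 0 := vec_ext _ _ (by rw [← hp, hu.1]; rfl) (by rw [← hq, hu.2]; rfl)
      exact sub_eq_zero.mp h1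
    rintro x (rfl | rfl | rfl)
    · exact ⟨0, by simp⟩
    · exact ⟨0, by simp [hm1]⟩
    · exact ⟨1, by simp⟩
  · have hk : ∃ k : ℝ, r = k * p ∧ s = k * q := by
      by_cases hp0 : p = 0
      · have hq0 : q ≠ 0 := fun hq0 => hu ⟨hp0, hq0⟩
        refine ⟨s / q, ?_, by field_simp⟩
        have : q * r = 0 := by rw [hp0] at hD; linarith
        rcases mul_eq_zero.mp this with h' | h'
        · exact absurd h' hq0
        · rw [h', hp0]; ring
      · refine ⟨r / p, by field_simp, ?_⟩
        rw [div_mul_eq_mul_div, eq_div_iff hp0]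
        linear_combination hD
    obtain ⟨k, hk1, hk2⟩ := hk
    have hv : m2 - m0 = k • (m1 - m0) := by
      apply vec_ext
      · simpa [hr, hp] using hk1
      · simpa [hs, hq] using hk2
    refine ⟨m1 - m0, ?_⟩
    rintro x (rfl | rfl | rfl)
    · exact ⟨0, by simp⟩
    · exact ⟨1, by simp⟩
    · exact ⟨k, by rw [← hv]; simp⟩

set_option maxHeartbeats 1000000 in
/-- The ellipse E is inscribed in the polytope P2 (E ⊆ P2) and is tangent to
each of the six lines supporting the facets of P2, tangency being expressed as
a unique intersection point with each supporting line. -/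
theorem ellipse_inscribed_in_polytope (m0 m1 m2 : EuclideanSpace ℝ (Fin 2))
    (h : ¬ Collinear ℝ ({m0, m1, m2} : Set (EuclideanSpace ℝ (Fin 2)))) :
    let E : Set (ℝ × ℝ) := {τ | ‖τ.2 • (m1 - m0) - τ.1 • (m2 - m0)‖ ^ 2 =
      ((m1 - m0) 0 * (m2 - m0) 1 - (m1 - m0) 1 * (m2 - m0) 0) ^ 2}
    let P2 : Set (ℝ × ℝ) := {τ | |τ.1| ≤ dist m0 m1 ∧ |τ.2| ≤ dist m0 m2 ∧
      |τ.2 - τ.1| ≤ dist m1 m2}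
    E ⊆ P2 ∧
    (∃! τ : ℝ × ℝ, τ ∈ E ∧ τ.1 = dist m0 m1) ∧
    (∃! τ : ℝ × ℝ, τ ∈ E ∧ τ.1 = -dist m0 m1) ∧
    (∃! τ : ℝ × ℝ, τ ∈ E ∧ τ.2 = dist m0 m2) ∧
    (∃! τ : ℝ × ℝ, τ ∈ E ∧ τ.2 = -dist m0 m2) ∧
    (∃! τ : ℝ × ℝ, τ ∈ E ∧ τ.2 - τ.1 = dist m1 m2) ∧
    (∃! τ : ℝ × ℝ, τ ∈ E ∧ τ.2 - τ.1 = -dist m1 m2) := by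
  intro E P2
  set p : ℝ := (m1 - m0) 0 with hp
  set q : ℝ := (m1 - m0) 1 with hq
  set r : ℝ := (m2 - m0) 0 with hr
  set s : ℝ := (m2 - m0) 1 with hs
  have hD : p * s - q * r ≠ 0 := noncollinear_det m0 m1 m2 h
  set A : ℝ := p ^ 2 + q ^ 2 with hA
  set B : ℝ := r ^ 2 + s ^ 2 with hB
  set C : ℝ := p * r + q * s with hC
  have hDet : 0 < A * B - C ^ 2 := by
    have h' : A * B - C ^ 2 = (p * s - q * r) ^ 2 := by rw [hA, hB, hC]; ring
    rw [h']
    positivity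
  -- membership characterization
  have hmem : ∀ t : ℝ × ℝ, t ∈ E ↔
      B * t.1 ^ 2 - 2 * C * t.1 * t.2 + A * t.2 ^ 2 = A * B - C ^ 2 := by
    intro t
    have h0 : t ∈ E ↔ ‖t.2 • (m1 - m0) - t.1 • (m2 - m0)‖ ^ 2 = (p * s - q * r) ^ 2 := Iff.rfl
    rw [h0, normsq2]
    simp only [PiLp.sub_apply, PiLp.smul_apply, smul_eq_mul, ← hp, ← hq, ← hr, ← hs,
      hA, hB, hC]
    constructor <;> intro h' <;> linear_combination h'
  -- distances
  have hda : dist m0 m1 ^ 2 = A := by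
    rw [dist_comm, dist_eq_norm, normsq2, hA, hp, hq]
  have hdb : dist m0 m2 ^ 2 = B := by
    rw [dist_comm, dist_eq_norm, normsq2, hB, hr, hs]
  have hdc : dist m1 m2 ^ 2 = A + B - 2 * C := by
    rw [dist_eq_norm, normsq2, hA, hB, hC, hp, hq, hr, hs]
    simp only [PiLp.sub_apply]
    ring
  have hd10 : dist m0 m1 ≠ 0 := by
    intro h0; rw [h0] at hda; simp at hda; nlinarith [hDet, sq_nonneg C, sq_nonneg B]
  have hd20 : dist m0 m2 ≠ 0 := by
    intro h0; rw [h0] at hdb; simp at hdb; nlinarith [hDet, sq_nonneg C, sq_nonneg A]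
  have hd21 : dist m1 m2 ≠ 0 := by
    intro h0; rw [h0] at hdc; simp at hdc; nlinarith [hDet, sq_nonneg (A - B)]
  clear_value p q r s A B C
  refine ⟨?_, ?_, ?_, ?_, ?_, ?_, ?_⟩
  · -- E ⊆ P2
    intro t ht
    rw [hmem] at ht
    refine ⟨?_, ?_, ?_⟩
    · apply abs_le_of_sq2 _ _ dist_nonneg
      rw [hda]
      have k1 : (A * B - C ^ 2) * (A - t.1 ^ 2) = (A * t.2 - C * t.1) ^ 2 := by
        linear_combination (-A) * ht
      nlinarith [sq_nonneg (A * t.2 - C * t.1)]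
    · apply abs_le_of_sq2 _ _ dist_nonneg
      rw [hdb]
      have k1 : (A * B - C ^ 2) * (B - t.2 ^ 2) = (B * t.1 - C * t.2) ^ 2 := by
        linear_combination (-B) * ht
      nlinarith [sq_nonneg (B * t.1 - C * t.2)]
    · apply abs_le_of_sq2 _ _ dist_nonneg
      rw [hdc]
      have k1 : (A * B - C ^ 2) * ((A + B - 2 * C) - (t.2 - t.1) ^ 2) =
          (t.1 * (B - C) + t.2 * (A - C)) ^ 2 := by
        linear_combination (-(A + B - 2 * C)) * ht
      nlinarith [sq_nonneg (t.1 * (B - C) + t.2 * (A - C))]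
  · obtain ⟨t, ⟨ht1, ht2⟩, hun⟩ := tangent_gen A B C 1 0 (dist m0 m1) hDet hd10
      (by rw [hda]; ring)
    exact ⟨t, ⟨(hmem t).mpr ht1, by linarith⟩,
      fun y hy => hun y ⟨(hmem y).mp hy.1, by rw [← hy.2]; ring⟩⟩
  · obtain ⟨t, ⟨ht1, ht2⟩, hun⟩ := tangent_gen A B C 1 0 (-dist m0 m1) hDet
      (neg_ne_zero.mpr hd10) (by rw [neg_pow, hda]; ring)
    exact ⟨t, ⟨(hmem t).mpr ht1, by linarith⟩,
      fun y hy => hun y ⟨(hmem y).mp hy.1, by rw [← hy.2]; ring⟩⟩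
  · obtain ⟨t, ⟨ht1, ht2⟩, hun⟩ := tangent_gen A B C 0 1 (dist m0 m2) hDet hd20
      (by rw [hdb]; ring)
    exact ⟨t, ⟨(hmem t).mpr ht1, by linarith⟩,
      fun y hy => hun y ⟨(hmem y).mp hy.1, by rw [← hy.2]; ring⟩⟩
  · obtain ⟨t, ⟨ht1, ht2⟩, hun⟩ := tangent_gen A B C 0 1 (-dist m0 m2) hDet
      (neg_ne_zero.mpr hd20) (by rw [neg_pow, hdb]; ring)
    exact ⟨t, ⟨(hmem t).mpr ht1, by linarith⟩,
      fun y hy => hun y ⟨(hmem y).mp hy.1, by rw [← hy.2]; ring⟩⟩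
  · obtain ⟨t, ⟨ht1, ht2⟩, hun⟩ := tangent_gen A B C (-1) 1 (dist m1 m2) hDet hd21
      (by rw [hdc]; ring)
    exact ⟨t, ⟨(hmem t).mpr ht1, by linarith⟩,
      fun y hy => hun y ⟨(hmem y).mp hy.1, by rw [← hy.2]; ring⟩⟩
  · obtain ⟨t, ⟨ht1, ht2⟩, hun⟩ := tangent_gen A B C (-1) 1 (-dist m1 m2) hDet
      (neg_ne_zero.mpr hd21) (by rw [neg_pow, hdc]; ring)
    exact ⟨t, ⟨(hmem t).mpr ht1, by linarith⟩,
      fun y hy => hun y ⟨(hmem y).mp hy.1, by rw [← hy.2]; ring⟩⟩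
end

section
/- Let the four open subsets Ω, Ω0, Ω1, Ω2 of ℝ² be defined via the signs of the cross products of the normalized displacement vectors di(x) = x − mi as in the text: Ω = {x : (d̃1∧d̃0 − d̃2∧d̃0 + d̃2∧d̃1)(x) < 0}, Ω0 = {x : (d1∧d0)(x) > 0 and (d2∧d0)(x) < 0}, Ω1 = {x : (d1∧d0)(x) > 0 and (d2∧d1)(x) > 0}, Ω2 = {x : (d2∧d0)(x) < 0 and (d2∧d1)(x) > 0}. Then these four sets are pairwise disjoint. -/
lemma key_ineq (a1 a2 b1 b2 c1 c2 r0 r1 r2 : ℝ)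
    (hr0 : 0 < r0) (hr1 : 0 < r1) (hr2 : 0 < r2)
    (h0 : r0^2 = a1^2+a2^2) (h1 : r1^2 = b1^2+b2^2) (h2 : r2^2 = c1^2+c2^2)
    (hF : r2*(b1*a2-b2*a1) - r1*(c1*a2-c2*a1) + r0*(c1*b2-c2*b1) < 0) :
    ¬ ((0 < b1*a2-b2*a1 ∧ c1*a2-c2*a1 < 0) ∨ (0 < b1*a2-b2*a1 ∧ 0 < c1*b2-c2*b1)
      ∨ (c1*a2-c2*a1 < 0 ∧ 0 < c1*b2-c2*b1)) := by
  have cs01 : b1*a1+b2*a2 ≤ r0*r1 := by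
    nlinarith [sq_nonneg (b1*a2-b2*a1), sq_nonneg (r0*r1 - (b1*a1+b2*a2)), mul_pos hr0 hr1,
      sq_nonneg (r0*r1 + (b1*a1+b2*a2))]
  have cs02 : c1*a1+c2*a2 ≤ r0*r2 := by
    nlinarith [sq_nonneg (c1*a2-c2*a1), mul_pos hr0 hr2, sq_nonneg (r0*r2 + (c1*a1+c2*a2))]
  have cs12 : c1*b1+c2*b2 ≤ r1*r2 := by
    nlinarith [sq_nonneg (c1*b2-c2*b1), mul_pos hr1 hr2, sq_nonneg (r1*r2 + (c1*b1+c2*b2))]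
  rintro (⟨hx, hy⟩ | ⟨hx, hy⟩ | ⟨hx, hy⟩)
  · have hid : r0^2*(c1*b2-c2*b1) = (c1*a2-c2*a1)*(b1*a1+b2*a2) - (b1*a2-b2*a1)*(c1*a1+c2*a2) := by
      rw [h0]; ring
    nlinarith [mul_nonneg hx.le (sub_nonneg.2 cs02), mul_nonneg (neg_nonneg.2 hy.le) (sub_nonneg.2 cs01),
      mul_neg_of_pos_of_neg hr0 hF]
  · have hid : r1^2*(c1*a2-c2*a1) = (b1*a2-b2*a1)*(c1*b1+c2*b2) + (c1*b2-c2*b1)*(b1*a1+b2*a2) := by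
      rw [h1]; ring
    nlinarith [mul_nonneg hx.le (sub_nonneg.2 cs12), mul_nonneg hy.le (sub_nonneg.2 cs01),
      mul_neg_of_pos_of_neg hr1 hF]
  · have hid : r2^2*(b1*a2-b2*a1) = -(c1*b2-c2*b1)*(c1*a1+c2*a2) + (c1*a2-c2*a1)*(c1*b1+c2*b2) := by
      rw [h2]; ring
    nlinarith [mul_nonneg hy.le (sub_nonneg.2 cs02), mul_nonneg (neg_nonneg.2 hx.le) (sub_nonneg.2 cs12),
      mul_neg_of_pos_of_neg hr2 hF]

/-- The four regions Ω, Ω0, Ω1, Ω2 are pairwise disjoint. -/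
theorem regions_pairwise_disjoint (m0 m1 m2 : EuclideanSpace ℝ (Fin 2))
    (hcr : (m1 - m0) 0 * (m2 - m0) 1 - (m1 - m0) 1 * (m2 - m0) 0 > 0) :
    let cross : EuclideanSpace ℝ (Fin 2) → EuclideanSpace ℝ (Fin 2) → ℝ :=
      fun u v => u 0 * v 1 - u 1 * v 0
    let d : EuclideanSpace ℝ (Fin 2) → EuclideanSpace ℝ (Fin 2) → EuclideanSpace ℝ (Fin 2) :=
      fun m x => x - m
    let nd : EuclideanSpace ℝ (Fin 2) → EuclideanSpace ℝ (Fin 2) → EuclideanSpace ℝ (Fin 2) :=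
      fun m x => ‖x - m‖⁻¹ • (x - m)
    let S : Set (EuclideanSpace ℝ (Fin 2)) := {x | x ≠ m0 ∧ x ≠ m1 ∧ x ≠ m2}
    let Ω : Set (EuclideanSpace ℝ (Fin 2)) := {x ∈ S |
      cross (nd m1 x) (nd m0 x) - cross (nd m2 x) (nd m0 x) + cross (nd m2 x) (nd m1 x) < 0}
    let Ω0 : Set (EuclideanSpace ℝ (Fin 2)) := {x ∈ S |
      cross (d m1 x) (d m0 x) > 0 ∧ cross (d m2 x) (d m0 x) < 0}
    let Ω1 : Set (EuclideanSpace ℝ (Fin 2)) := {x ∈ S |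
      cross (d m1 x) (d m0 x) > 0 ∧ cross (d m2 x) (d m1 x) > 0}
    let Ω2 : Set (EuclideanSpace ℝ (Fin 2)) := {x ∈ S |
      cross (d m2 x) (d m0 x) < 0 ∧ cross (d m2 x) (d m1 x) > 0}
    Disjoint Ω Ω0 ∧ Disjoint Ω Ω1 ∧ Disjoint Ω Ω2 ∧
    Disjoint Ω0 Ω1 ∧ Disjoint Ω0 Ω2 ∧ Disjoint Ω1 Ω2 := by
  intro cross d nd S Ω Ω0 Ω1 Ω2
  have hD : (0:ℝ) < (m1 0 - m0 0) * (m2 1 - m0 1) - (m1 1 - m0 1) * (m2 0 - m0 0) := hcr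
  -- the fundamental linear identity among the three unnormalized cross products
  have hsum : ∀ x : EuclideanSpace ℝ (Fin 2),
      cross (d m1 x) (d m0 x) - cross (d m2 x) (d m0 x) + cross (d m2 x) (d m1 x)
        = -((m1 0 - m0 0) * (m2 1 - m0 1) - (m1 1 - m0 1) * (m2 0 - m0 0)) := by
    intro x
    show ((x 0 - m1 0) * (x 1 - m0 1) - (x 1 - m1 1) * (x 0 - m0 0))
        - ((x 0 - m2 0) * (x 1 - m0 1) - (x 1 - m2 1) * (x 0 - m0 0))
        + ((x 0 - m2 0) * (x 1 - m1 1) - (x 1 - m2 1) * (x 0 - m1 0)) = _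
    ring
  -- Ω is disjoint from each Ωi
  have hmain : ∀ x, x ∈ Ω → x ∉ Ω0 ∧ x ∉ Ω1 ∧ x ∉ Ω2 := by
    rintro x ⟨⟨hx0, hx1, hx2⟩, hN⟩
    have hr0 : (0:ℝ) < ‖x - m0‖ := norm_pos_iff.2 (sub_ne_zero.2 hx0)
    have hr1 : (0:ℝ) < ‖x - m1‖ := norm_pos_iff.2 (sub_ne_zero.2 hx1)
    have hr2 : (0:ℝ) < ‖x - m2‖ := norm_pos_iff.2 (sub_ne_zero.2 hx2)
    have hnorm : ∀ m : EuclideanSpace ℝ (Fin 2),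
        ‖x - m‖^2 = (x 0 - m 0)^2 + (x 1 - m 1)^2 := by
      intro m
      rw [EuclideanSpace.norm_eq, Real.sq_sqrt (by positivity)]
      simp [Fin.sum_univ_two, sq_abs]
    have hN' : (‖x - m1‖⁻¹ * (x 0 - m1 0)) * (‖x - m0‖⁻¹ * (x 1 - m0 1))
        - (‖x - m1‖⁻¹ * (x 1 - m1 1)) * (‖x - m0‖⁻¹ * (x 0 - m0 0))
        - ((‖x - m2‖⁻¹ * (x 0 - m2 0)) * (‖x - m0‖⁻¹ * (x 1 - m0 1))
          - (‖x - m2‖⁻¹ * (x 1 - m2 1)) * (‖x - m0‖⁻¹ * (x 0 - m0 0)))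
        + ((‖x - m2‖⁻¹ * (x 0 - m2 0)) * (‖x - m1‖⁻¹ * (x 1 - m1 1))
          - (‖x - m2‖⁻¹ * (x 1 - m2 1)) * (‖x - m1‖⁻¹ * (x 0 - m1 0))) < 0 := hN
    have hF : ‖x - m2‖ * ((x 0 - m1 0)*(x 1 - m0 1) - (x 1 - m1 1)*(x 0 - m0 0))
        - ‖x - m1‖ * ((x 0 - m2 0)*(x 1 - m0 1) - (x 1 - m2 1)*(x 0 - m0 0))
        + ‖x - m0‖ * ((x 0 - m2 0)*(x 1 - m1 1) - (x 1 - m2 1)*(x 0 - m1 0)) < 0 := by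
      have heq : ‖x - m2‖ * ((x 0 - m1 0)*(x 1 - m0 1) - (x 1 - m1 1)*(x 0 - m0 0))
          - ‖x - m1‖ * ((x 0 - m2 0)*(x 1 - m0 1) - (x 1 - m2 1)*(x 0 - m0 0))
          + ‖x - m0‖ * ((x 0 - m2 0)*(x 1 - m1 1) - (x 1 - m2 1)*(x 0 - m1 0))
          = (‖x - m0‖ * ‖x - m1‖ * ‖x - m2‖) *
            ((‖x - m1‖⁻¹ * (x 0 - m1 0)) * (‖x - m0‖⁻¹ * (x 1 - m0 1))
            - (‖x - m1‖⁻¹ * (x 1 - m1 1)) * (‖x - m0‖⁻¹ * (x 0 - m0 0))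
            - ((‖x - m2‖⁻¹ * (x 0 - m2 0)) * (‖x - m0‖⁻¹ * (x 1 - m0 1))
              - (‖x - m2‖⁻¹ * (x 1 - m2 1)) * (‖x - m0‖⁻¹ * (x 0 - m0 0)))
            + ((‖x - m2‖⁻¹ * (x 0 - m2 0)) * (‖x - m1‖⁻¹ * (x 1 - m1 1))
              - (‖x - m2‖⁻¹ * (x 1 - m2 1)) * (‖x - m1‖⁻¹ * (x 0 - m1 0)))) := by
        field_simp
      rw [heq]
      exact mul_neg_of_pos_of_neg (by positivity) hN'
    have hkey := key_ineq (x 0 - m0 0) (x 1 - m0 1) (x 0 - m1 0) (x 1 - m1 1)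
      (x 0 - m2 0) (x 1 - m2 1) ‖x - m0‖ ‖x - m1‖ ‖x - m2‖ hr0 hr1 hr2
      (hnorm m0) (hnorm m1) (hnorm m2) hF
    refine ⟨fun hmem => hkey ?_, fun hmem => hkey ?_, fun hmem => hkey ?_⟩
    · exact Or.inl ⟨hmem.2.1, hmem.2.2⟩
    · exact Or.inr (Or.inl ⟨hmem.2.1, hmem.2.2⟩)
    · exact Or.inr (Or.inr ⟨hmem.2.1, hmem.2.2⟩)
  -- among Ω0, Ω1, Ω2: any two memberships force all three sign conditions,
  -- contradicting the identity hsum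
  have hlin : ∀ x, cross (d m1 x) (d m0 x) > 0 → cross (d m2 x) (d m0 x) < 0 →
      cross (d m2 x) (d m1 x) > 0 → False := by
    intro x h1 h2 h3
    have := hsum x
    linarith
  refine ⟨Set.disjoint_left.2 fun x hx hx' => (hmain x hx).1 hx',
    Set.disjoint_left.2 fun x hx hx' => (hmain x hx).2.1 hx',
    Set.disjoint_left.2 fun x hx hx' => (hmain x hx).2.2 hx',
    Set.disjoint_left.2 fun x hx hx' => hlin x hx.2.1 hx.2.2 hx'.2.2,
    Set.disjoint_left.2 fun x hx hx' => hlin x hx.2.1 hx.2.2 hx'.2.2,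
    Set.disjoint_left.2 fun x hx hx' => hlin x hx.2.1 hx'.2.1 hx.2.2⟩
end

section
/- The union of the closures of Ω, Ω0, Ω1, Ω2 is all of ℝ², and the complement of Ω ∪ Ω0 ∪ Ω1 ∪ Ω2 in ℝ² is the degeneracy locus D, which is the union of the six closed half-lines originating at the receivers mi along the lines through pairs of receivers (each half-line being the prolongation of a segment joining two receivers beyond one endpoint). -/
abbrev E2 := EuclideanSpace ℝ (Fin 2)

def hlset (a b : E2) : Set E2 := {x | ∃ t : ℝ, 0 ≤ t ∧ x = b + t • (b - a)}

lemma e2ext {x y : E2} (h0 : x 0 = y 0) (h1 : x 1 = y 1) : x = y := by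
  apply PiLp.ext; intro i; fin_cases i <;> assumption

lemma normsq2_s8 (v : E2) : ‖v‖^2 = (v 0)^2 + (v 1)^2 := by
  rw [EuclideanSpace.norm_eq, Real.sq_sqrt (by positivity)]
  simp [Fin.sum_univ_two, sq_abs]

lemma nd_smul_pos {e : E2} {s : ℝ} (hs : 0 < s) :
    ‖s • e‖⁻¹ • (s • e) = ‖e‖⁻¹ • e := by
  have h : (s * ‖e‖)⁻¹ * s = ‖e‖⁻¹ := by
    rw [mul_inv, mul_comm s⁻¹, mul_assoc, inv_mul_cancel₀ hs.ne', mul_one]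
  rw [norm_smul, Real.norm_eq_abs, abs_of_pos hs, smul_smul, h]

lemma hl_decomp {A B y : E2} (h : y ∈ hlset A B) :
    ∃ t : ℝ, 0 ≤ t ∧ y - B = t • (B - A) ∧ y - A = (1 + t) • (B - A) := by
  obtain ⟨t, ht, rfl⟩ := h
  refine ⟨t, ht, by abel, ?_⟩
  rw [add_smul, one_smul]; abel

lemma mem_hl_union {A B x : E2} (hAB : A ≠ B) {k : ℝ} (hk : 0 < k)
    (h : x - A = k • (x - B)) : x ∈ hlset A B ∪ hlset B A := by
  have hk1 : k ≠ 1 := by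
    rintro rfl
    rw [one_smul] at h
    exact hAB (sub_right_injective h)
  have h2 : (k - 1) • (x - B) = B - A := by
    linear_combination (norm := module) -h
  rcases lt_or_gt_of_ne hk1 with hlt | hgt
  · -- k < 1 : x = A + (k/(1-k)) • (A - B)
    right
    refine ⟨k / (1 - k), le_of_lt (div_pos hk (by linarith)), ?_⟩
    have h3 : (1 - k) • (x - A) = k • (A - B) := by
      linear_combination (norm := module) h
    have h4 : x - A = (k / (1 - k)) • (A - B) := by
      have hne : (1 - k) ≠ 0 := by linarith
      calc x - A = (1-k)⁻¹ • ((1-k) • (x - A)) := by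
            rw [smul_smul, inv_mul_cancel₀ hne, one_smul]
        _ = (1-k)⁻¹ • (k • (A - B)) := by rw [h3]
        _ = (k / (1 - k)) • (A - B) := by rw [smul_smul, div_eq_inv_mul]
    rw [← h4]; abel
  · -- k > 1 : x = B + (k-1)⁻¹ • (B - A)
    left
    refine ⟨(k - 1)⁻¹, le_of_lt (inv_pos.2 (by linarith)), ?_⟩
    have hne : (k - 1) ≠ 0 := by linarith
    have h4 : x - B = (k - 1)⁻¹ • (B - A) := by
      calc x - B = (k-1)⁻¹ • ((k-1) • (x - B)) := by
            rw [smul_smul, inv_mul_cancel₀ hne, one_smul]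
        _ = (k-1)⁻¹ • (B - A) := by rw [h2]
    rw [← h4]; abel

lemma scale_eq {nu nv A B : ℝ} (hnu : nu ≠ 0) (h : nu⁻¹ * A = nv⁻¹ * B) :
    A = (nu * nv⁻¹) * B := by
  calc A = nu * (nu⁻¹ * A) := by rw [← mul_assoc, mul_inv_cancel₀ hnu, one_mul]
    _ = nu * (nv⁻¹ * B) := by rw [h]
    _ = (nu * nv⁻¹) * B := by ring
set_option maxHeartbeats 1000000 in
lemma collinear_unit (p0 p1 q0 q1 r0 r1 : ℝ)
    (hp : p0^2 + p1^2 = 1) (hq : q0^2 + q1^2 = 1) (hr : r0^2 + r1^2 = 1)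
    (hF : (q0-r0)*(p1-r1) - (q1-r1)*(p0-r0) = 0)
    (hpr : ¬(p0 = r0 ∧ p1 = r1)) (hqr : ¬(q0 = r0 ∧ q1 = r1)) :
    p0 = q0 ∧ p1 = q1 := by
  have hVpos : 0 < (p0-r0)^2 + (p1-r1)^2 := by
    rcases lt_or_eq_of_le (by positivity : (0:ℝ) ≤ (p0-r0)^2 + (p1-r1)^2) with h | h
    · exact h
    · exfalso; exact hpr ⟨by nlinarith [sq_nonneg (p0-r0), sq_nonneg (p1-r1)],
        by nlinarith [sq_nonneg (p0-r0), sq_nonneg (p1-r1)]⟩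
  have h1 : (q0-r0)*((p0-r0)^2 + (p1-r1)^2)
      = ((q0-r0)*(p0-r0) + (q1-r1)*(p1-r1))*(p0-r0) := by linear_combination (p1-r1)*hF
  have h2 : (q1-r1)*((p0-r0)^2 + (p1-r1)^2)
      = ((q0-r0)*(p0-r0) + (q1-r1)*(p1-r1))*(p1-r1) := by linear_combination (-(p0-r0))*hF
  have h4 : ((q0-r0)^2+(q1-r1)^2)*((p0-r0)^2 + (p1-r1)^2)
      = ((q0-r0)*(p0-r0) + (q1-r1)*(p1-r1))^2 := by
    linear_combination (q0-r0)*h1 + (q1-r1)*h2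
  have h6 : ((q0-r0)*(p0-r0) + (q1-r1)*(p1-r1)) *
      (((q0-r0)*(p0-r0) + (q1-r1)*(p1-r1)) - ((p0-r0)^2 + (p1-r1)^2)) = 0 := by
    linear_combination ((p0-r0)^2 + (p1-r1)^2)*(hq - hr)
      - 2*(r0*h1 + r1*h2)
      - ((q0-r0)*(p0-r0) + (q1-r1)*(p1-r1))*(hp - hr) - h4
  rcases mul_eq_zero.1 h6 with hT0 | hTV
  · exfalso
    have hU : (q0-r0)^2+(q1-r1)^2 = 0 := by
      rw [hT0] at h4
      rcases mul_eq_zero.1 (by linarith : ((q0-r0)^2+(q1-r1)^2)*((p0-r0)^2 + (p1-r1)^2) = 0) with h | h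
      · exact h
      · exact absurd h (ne_of_gt hVpos)
    exact hqr ⟨by nlinarith [sq_nonneg (q0-r0), sq_nonneg (q1-r1)],
      by nlinarith [sq_nonneg (q0-r0), sq_nonneg (q1-r1)]⟩
  · constructor
    · have h7 : ((q0-r0) - (p0-r0))*((p0-r0)^2 + (p1-r1)^2) = 0 := by
        linear_combination h1 + (p0-r0)*hTV
      rcases mul_eq_zero.1 h7 with h | h
      · linarith
      · exact absurd h (ne_of_gt hVpos)
    · have h7 : ((q1-r1) - (p1-r1))*((p0-r0)^2 + (p1-r1)^2) = 0 := by
        linear_combination h2 + (p1-r1)*hTV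
      rcases mul_eq_zero.1 h7 with h | h
      · linarith
      · exact absurd h (ne_of_gt hVpos)
set_option maxHeartbeats 1000000 in
lemma wedge_cover (p0 p1 q0 q1 r0 r1 : ℝ)
    (hp : p0^2 + p1^2 = 1) (hq : q0^2 + q1^2 = 1) (hr : r0^2 + r1^2 = 1)
    (hF : (q0*p1 - q1*p0) - (r0*p1 - r1*p0) + (r0*q1 - r1*q0) > 0) :
    (0 < q0*p1 - q1*p0 ∧ r0*p1 - r1*p0 < 0) ∨
    (0 < q0*p1 - q1*p0 ∧ 0 < r0*q1 - r1*q0) ∨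
    (r0*p1 - r1*p0 < 0 ∧ 0 < r0*q1 - r1*q0) := by
  set a : ℝ := q0*p1 - q1*p0 with ha
  set b : ℝ := r0*p1 - r1*p0 with hb
  set c : ℝ := r0*q1 - r1*q0 with hc
  have keyA : a^2 = b^2 + c^2 - 2*b*c*(p0*q0+p1*q1) := by
    have h : a^2*(r0^2+r1^2) = b^2*(q0^2+q1^2) + c^2*(p0^2+p1^2)
        - 2*b*c*((p0*q0+p1*q1)) := by rw [ha, hb, hc]; ring
    rw [hp, hq, hr] at h; linarith
  have keyB : b^2 = a^2 + c^2 + 2*a*c*(p0*r0+p1*r1) := by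
    have h : b^2*(q0^2+q1^2) = a^2*(r0^2+r1^2) + c^2*(p0^2+p1^2)
        + 2*a*c*((p0*r0+p1*r1)) := by rw [ha, hb, hc]; ring
    rw [hp, hq, hr] at h; linarith
  have keyC : c^2 = a^2 + b^2 - 2*a*b*(q0*r0+q1*r1) := by
    have h : c^2*(p0^2+p1^2) = a^2*(r0^2+r1^2) + b^2*(q0^2+q1^2)
        - 2*a*b*((q0*r0+q1*r1)) := by rw [ha, hb, hc]; ring
    rw [hp, hq, hr] at h; linarith
  have hα : p0*q0+p1*q1 ≤ 1 := by nlinarith [sq_nonneg (p0-q0), sq_nonneg (p1-q1)]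
  have hβ : p0*r0+p1*r1 ≤ 1 := by nlinarith [sq_nonneg (p0-r0), sq_nonneg (p1-r1)]
  have hγ : q0*r0+q1*r1 ≤ 1 := by nlinarith [sq_nonneg (q0-r0), sq_nonneg (q1-r1)]
  by_contra hcon
  push_neg at hcon
  obtain ⟨hc1, hc2, hc3⟩ := hcon
  rcases le_or_gt a 0 with hA | hA
  · rcases le_or_gt 0 b with hB | hB
    · rcases le_or_gt c 0 with hC | hC
      · linarith
      · -- a ≤ 0, b ≥ 0, c > 0 : use keyC
        nlinarith [keyC, mul_nonneg (neg_nonneg.2 hA) hB, mul_pos hC (by linarith : (0:ℝ) < c + (b - a))]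
    · -- b < 0
      have hC : c ≤ 0 := hc3 hB
      -- a ≤ 0, b < 0, c ≤ 0 : use keyB
      nlinarith [keyB, mul_nonneg (neg_nonneg.2 hA) (neg_nonneg.2 hC), mul_pos (by linarith : (0:ℝ) < -b) (by linarith : (0:ℝ) < -b + -(a + c))]
  · have hB : 0 ≤ b := hc1 hA
    have hC : c ≤ 0 := hc2 hA
    -- a > 0, b ≥ 0, c ≤ 0 : use keyA
    nlinarith [keyA, mul_nonneg hB (neg_nonneg.2 hC), mul_pos hA (by linarith : (0:ℝ) < a + (b - c))]
set_option maxHeartbeats 4000000 in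
/-- The closures of Ω, Ω0, Ω1, Ω2 cover the plane, and the complement of their
union is the degeneracy locus D, the union of the six closed half-lines
originating at the receivers along the lines through pairs of receivers
(each half-line being the prolongation of the segment joining two receivers
beyond one endpoint). -/
theorem regions_cover_and_degeneracy_locus (m0 m1 m2 : EuclideanSpace ℝ (Fin 2))
    (hcr : (m1 - m0) 0 * (m2 - m0) 1 - (m1 - m0) 1 * (m2 - m0) 0 > 0) :
    let cross : EuclideanSpace ℝ (Fin 2) → EuclideanSpace ℝ (Fin 2) → ℝ :=
      fun u v => u 0 * v 1 - u 1 * v 0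
    let d : EuclideanSpace ℝ (Fin 2) → EuclideanSpace ℝ (Fin 2) → EuclideanSpace ℝ (Fin 2) :=
      fun m x => x - m
    let nd : EuclideanSpace ℝ (Fin 2) → EuclideanSpace ℝ (Fin 2) → EuclideanSpace ℝ (Fin 2) :=
      fun m x => ‖x - m‖⁻¹ • (x - m)
    let S : Set (EuclideanSpace ℝ (Fin 2)) := {x | x ≠ m0 ∧ x ≠ m1 ∧ x ≠ m2}
    let Ω : Set (EuclideanSpace ℝ (Fin 2)) := {x ∈ S |
      cross (nd m1 x) (nd m0 x) - cross (nd m2 x) (nd m0 x) + cross (nd m2 x) (nd m1 x) < 0}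
    let Ω0 : Set (EuclideanSpace ℝ (Fin 2)) := {x ∈ S |
      cross (d m1 x) (d m0 x) > 0 ∧ cross (d m2 x) (d m0 x) < 0}
    let Ω1 : Set (EuclideanSpace ℝ (Fin 2)) := {x ∈ S |
      cross (d m1 x) (d m0 x) > 0 ∧ cross (d m2 x) (d m1 x) > 0}
    let Ω2 : Set (EuclideanSpace ℝ (Fin 2)) := {x ∈ S |
      cross (d m2 x) (d m0 x) < 0 ∧ cross (d m2 x) (d m1 x) > 0}
    -- `hl a b` is the closed half-line prolonging the segment from `a` to `b` beyond `b`
    let hl : EuclideanSpace ℝ (Fin 2) → EuclideanSpace ℝ (Fin 2) → Set (EuclideanSpace ℝ (Fin 2)) :=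
      fun a b => {x | ∃ t : ℝ, 0 ≤ t ∧ x = b + t • (b - a)}
    (closure Ω ∪ closure Ω0 ∪ closure Ω1 ∪ closure Ω2 = Set.univ) ∧
    ((Ω ∪ Ω0 ∪ Ω1 ∪ Ω2)ᶜ =
      hl m0 m1 ∪ hl m1 m0 ∪ hl m0 m2 ∪ hl m2 m0 ∪ hl m1 m2 ∪ hl m2 m1) := by
  intro cross d nd S Ω Ω0 Ω1 Ω2 hl
  have cross_def : cross = fun u v => u 0 * v 1 - u 1 * v 0 := rfl
  have d_def : d = fun m x => x - m := rfl
  have nd_def : nd = fun m x => ‖x - m‖⁻¹ • (x - m) := rfl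
  have hΩ : ∀ x, x ∈ Ω ↔ (x ≠ m0 ∧ x ≠ m1 ∧ x ≠ m2) ∧
      cross (nd m1 x) (nd m0 x) - cross (nd m2 x) (nd m0 x) + cross (nd m2 x) (nd m1 x) < 0 :=
    fun x => Iff.rfl
  have hΩ0 : ∀ x, x ∈ Ω0 ↔ (x ≠ m0 ∧ x ≠ m1 ∧ x ≠ m2) ∧
      (cross (d m1 x) (d m0 x) > 0 ∧ cross (d m2 x) (d m0 x) < 0) := fun x => Iff.rfl
  have hΩ1 : ∀ x, x ∈ Ω1 ↔ (x ≠ m0 ∧ x ≠ m1 ∧ x ≠ m2) ∧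
      (cross (d m1 x) (d m0 x) > 0 ∧ cross (d m2 x) (d m1 x) > 0) := fun x => Iff.rfl
  have hΩ2 : ∀ x, x ∈ Ω2 ↔ (x ≠ m0 ∧ x ≠ m1 ∧ x ≠ m2) ∧
      (cross (d m2 x) (d m0 x) < 0 ∧ cross (d m2 x) (d m1 x) > 0) := fun x => Iff.rfl
  simp only [PiLp.sub_apply] at hcr
  have hm01 : m0 ≠ m1 := by intro h; rw [h] at hcr; simp at hcr
  have hm02 : m0 ≠ m2 := by intro h; rw [h] at hcr; simp at hcr
  have hm12 : m1 ≠ m2 := by intro h; rw [h] at hcr; nlinarith [hcr]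
  -- the three line claims
  have claim01 : ∀ (x e : E2) (s u : ℝ), 0 < s → 0 < u →
      x - m0 = s • e → x - m1 = u • e →
      x ∉ Ω ∧ x ∉ Ω0 ∧ x ∉ Ω1 ∧ x ∉ Ω2 := by
    intro x e s u hs hu hxs hxu
    have h00 : x 0 - m0 0 = s * e 0 := by
      simpa [PiLp.sub_apply, PiLp.smul_apply] using congrFun (congrArg WithLp.ofLp hxs) 0
    have h01 : x 1 - m0 1 = s * e 1 := by
      simpa [PiLp.sub_apply, PiLp.smul_apply] using congrFun (congrArg WithLp.ofLp hxs) 1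
    have h10 : x 0 - m1 0 = u * e 0 := by
      simpa [PiLp.sub_apply, PiLp.smul_apply] using congrFun (congrArg WithLp.ofLp hxu) 0
    have h11 : x 1 - m1 1 = u * e 1 := by
      simpa [PiLp.sub_apply, PiLp.smul_apply] using congrFun (congrArg WithLp.ofLp hxu) 1
    have hnd : nd m0 x = nd m1 x := by
      rw [nd_def]; dsimp only
      rw [hxs, hxu, nd_smul_pos hs, nd_smul_pos hu]
    refine ⟨?_, ?_, ?_, ?_⟩
    · intro hx
      have hF := ((hΩ x).1 hx).2
      rw [hnd] at hF
      simp only [cross_def] at hF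
      linarith
    · intro hx
      have hA := ((hΩ0 x).1 hx).2.1
      simp only [cross_def, d_def, PiLp.sub_apply] at hA
      rw [h00, h01, h10, h11] at hA
      nlinarith [hA]
    · intro hx
      have hA := ((hΩ1 x).1 hx).2.1
      simp only [cross_def, d_def, PiLp.sub_apply] at hA
      rw [h00, h01, h10, h11] at hA
      nlinarith [hA]
    · intro hx
      obtain ⟨-, hB, hC⟩ := (hΩ2 x).1 hx
      simp only [cross_def, d_def, PiLp.sub_apply] at hB hC
      rw [h00, h01] at hB
      rw [h10, h11] at hC
      have hBe : (x 0 - m2 0) * (s * e 1) - (x 1 - m2 1) * (s * e 0)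
          = s * ((x 0 - m2 0) * e 1 - (x 1 - m2 1) * e 0) := by ring
      have hCe : (x 0 - m2 0) * (u * e 1) - (x 1 - m2 1) * (u * e 0)
          = u * ((x 0 - m2 0) * e 1 - (x 1 - m2 1) * e 0) := by ring
      rw [hBe] at hB; rw [hCe] at hC
      have hg1 : (x 0 - m2 0) * e 1 - (x 1 - m2 1) * e 0 < 0 := by
        by_contra hh; push_neg at hh
        nlinarith [mul_nonneg hs.le hh]
      nlinarith [mul_pos hu (neg_pos.2 hg1), hC]
  have claim02 : ∀ (x e : E2) (s u : ℝ), 0 < s → 0 < u →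
      x - m0 = s • e → x - m2 = u • e →
      x ∉ Ω ∧ x ∉ Ω0 ∧ x ∉ Ω1 ∧ x ∉ Ω2 := by
    intro x e s u hs hu hxs hxu
    have h00 : x 0 - m0 0 = s * e 0 := by
      simpa [PiLp.sub_apply, PiLp.smul_apply] using congrFun (congrArg WithLp.ofLp hxs) 0
    have h01 : x 1 - m0 1 = s * e 1 := by
      simpa [PiLp.sub_apply, PiLp.smul_apply] using congrFun (congrArg WithLp.ofLp hxs) 1
    have h20 : x 0 - m2 0 = u * e 0 := by
      simpa [PiLp.sub_apply, PiLp.smul_apply] using congrFun (congrArg WithLp.ofLp hxu) 0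
    have h21 : x 1 - m2 1 = u * e 1 := by
      simpa [PiLp.sub_apply, PiLp.smul_apply] using congrFun (congrArg WithLp.ofLp hxu) 1
    have hnd : nd m0 x = nd m2 x := by
      rw [nd_def]; dsimp only
      rw [hxs, hxu, nd_smul_pos hs, nd_smul_pos hu]
    refine ⟨?_, ?_, ?_, ?_⟩
    · intro hx
      have hF := ((hΩ x).1 hx).2
      rw [hnd] at hF
      simp only [cross_def] at hF
      linarith
    · intro hx
      have hB := ((hΩ0 x).1 hx).2.2
      simp only [cross_def, d_def, PiLp.sub_apply] at hB
      rw [h00, h01, h20, h21] at hB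
      nlinarith [hB]
    · intro hx
      obtain ⟨-, hA, hC⟩ := (hΩ1 x).1 hx
      simp only [cross_def, d_def, PiLp.sub_apply] at hA hC
      rw [h00, h01] at hA
      rw [h20, h21] at hC
      have hAe : (x 0 - m1 0) * (s * e 1) - (x 1 - m1 1) * (s * e 0)
          = s * ((x 0 - m1 0) * e 1 - (x 1 - m1 1) * e 0) := by ring
      have hCe : (u * e 0) * (x 1 - m1 1) - (u * e 1) * (x 0 - m1 0)
          = -(u * ((x 0 - m1 0) * e 1 - (x 1 - m1 1) * e 0)) := by ring
      rw [hAe] at hA; rw [hCe] at hC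
      have hg1 : 0 < (x 0 - m1 0) * e 1 - (x 1 - m1 1) * e 0 := by
        by_contra hh; push_neg at hh
        nlinarith [mul_nonneg hs.le (neg_nonneg.2 hh)]
      nlinarith [mul_pos hu hg1]
    · intro hx
      have hB := ((hΩ2 x).1 hx).2.1
      simp only [cross_def, d_def, PiLp.sub_apply] at hB
      rw [h00, h01, h20, h21] at hB
      nlinarith [hB]
  have claim12 : ∀ (x e : E2) (s u : ℝ), 0 < s → 0 < u →
      x - m1 = s • e → x - m2 = u • e →
      x ∉ Ω ∧ x ∉ Ω0 ∧ x ∉ Ω1 ∧ x ∉ Ω2 := by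
    intro x e s u hs hu hxs hxu
    have h10 : x 0 - m1 0 = s * e 0 := by
      simpa [PiLp.sub_apply, PiLp.smul_apply] using congrFun (congrArg WithLp.ofLp hxs) 0
    have h11 : x 1 - m1 1 = s * e 1 := by
      simpa [PiLp.sub_apply, PiLp.smul_apply] using congrFun (congrArg WithLp.ofLp hxs) 1
    have h20 : x 0 - m2 0 = u * e 0 := by
      simpa [PiLp.sub_apply, PiLp.smul_apply] using congrFun (congrArg WithLp.ofLp hxu) 0
    have h21 : x 1 - m2 1 = u * e 1 := by
      simpa [PiLp.sub_apply, PiLp.smul_apply] using congrFun (congrArg WithLp.ofLp hxu) 1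
    have hnd : nd m1 x = nd m2 x := by
      rw [nd_def]; dsimp only
      rw [hxs, hxu, nd_smul_pos hs, nd_smul_pos hu]
    refine ⟨?_, ?_, ?_, ?_⟩
    · intro hx
      have hF := ((hΩ x).1 hx).2
      rw [hnd] at hF
      simp only [cross_def] at hF
      linarith
    · intro hx
      obtain ⟨-, hA, hB⟩ := (hΩ0 x).1 hx
      simp only [cross_def, d_def, PiLp.sub_apply] at hA hB
      rw [h10, h11] at hA
      rw [h20, h21] at hB
      have hAe : (s * e 0) * (x 1 - m0 1) - (s * e 1) * (x 0 - m0 0)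
          = s * (e 0 * (x 1 - m0 1) - e 1 * (x 0 - m0 0)) := by ring
      have hBe : (u * e 0) * (x 1 - m0 1) - (u * e 1) * (x 0 - m0 0)
          = u * (e 0 * (x 1 - m0 1) - e 1 * (x 0 - m0 0)) := by ring
      rw [hAe] at hA; rw [hBe] at hB
      have hg1 : 0 < e 0 * (x 1 - m0 1) - e 1 * (x 0 - m0 0) := by
        by_contra hh; push_neg at hh
        nlinarith [mul_nonneg hs.le (neg_nonneg.2 hh)]
      nlinarith [mul_pos hu hg1]
    · intro hx
      have hC := ((hΩ1 x).1 hx).2.2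
      simp only [cross_def, d_def, PiLp.sub_apply] at hC
      rw [h10, h11, h20, h21] at hC
      nlinarith [hC]
    · intro hx
      have hC := ((hΩ2 x).1 hx).2.2
      simp only [cross_def, d_def, PiLp.sub_apply] at hC
      rw [h10, h11, h20, h21] at hC
      nlinarith [hC]
  have part2 : (Ω ∪ Ω0 ∪ Ω1 ∪ Ω2)ᶜ =
      hlset m0 m1 ∪ hlset m1 m0 ∪ hlset m0 m2 ∪ hlset m2 m0 ∪ hlset m1 m2 ∪ hlset m2 m1 := by
    ext x
    simp only [Set.mem_compl_iff, Set.mem_union, not_or]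
    constructor
    · rintro ⟨⟨⟨hxΩ, hxΩ0⟩, hxΩ1⟩, hxΩ2⟩
      by_cases hx0 : x = m0
      · exact Or.inl (Or.inl (Or.inl (Or.inl (Or.inr ⟨0, le_refl 0, by rw [hx0]; simp⟩))))
      by_cases hx1 : x = m1
      · exact Or.inl (Or.inl (Or.inl (Or.inl (Or.inl ⟨0, le_refl 0, by rw [hx1]; simp⟩))))
      by_cases hx2 : x = m2
      · exact Or.inl (Or.inl (Or.inl (Or.inr ⟨0, le_refl 0, by rw [hx2]; simp⟩)))
      have hxS : x ≠ m0 ∧ x ≠ m1 ∧ x ≠ m2 := ⟨hx0, hx1, hx2⟩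
      have hnu : (0:ℝ) < ‖x - m0‖ := by rw [norm_pos_iff]; exact sub_ne_zero.2 hx0
      have hnv : (0:ℝ) < ‖x - m1‖ := by rw [norm_pos_iff]; exact sub_ne_zero.2 hx1
      have hnw : (0:ℝ) < ‖x - m2‖ := by rw [norm_pos_iff]; exact sub_ne_zero.2 hx2
      have hnu' : ‖x - m0‖ ≠ 0 := hnu.ne'
      have hnv' : ‖x - m1‖ ≠ 0 := hnv.ne'
      have hnw' : ‖x - m2‖ ≠ 0 := hnw.ne'
      have hUsq : (x 0 - m0 0)^2 + (x 1 - m0 1)^2 = ‖x - m0‖^2 := by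
        rw [normsq2_s8]; simp [PiLp.sub_apply]
      have hVsq : (x 0 - m1 0)^2 + (x 1 - m1 1)^2 = ‖x - m1‖^2 := by
        rw [normsq2_s8]; simp [PiLp.sub_apply]
      have hWsq : (x 0 - m2 0)^2 + (x 1 - m2 1)^2 = ‖x - m2‖^2 := by
        rw [normsq2_s8]; simp [PiLp.sub_apply]
      have hPu : (‖x - m0‖⁻¹ * (x 0 - m0 0))^2 + (‖x - m0‖⁻¹ * (x 1 - m0 1))^2 = 1 := by
        field_simp
        linear_combination hUsq
      have hQu : (‖x - m1‖⁻¹ * (x 0 - m1 0))^2 + (‖x - m1‖⁻¹ * (x 1 - m1 1))^2 = 1 := by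
        field_simp
        linear_combination hVsq
      have hRu : (‖x - m2‖⁻¹ * (x 0 - m2 0))^2 + (‖x - m2‖⁻¹ * (x 1 - m2 1))^2 = 1 := by
        field_simp
        linear_combination hWsq
      have hAeq : cross (d m1 x) (d m0 x) = (‖x - m1‖ * ‖x - m0‖) *
          ((‖x - m1‖⁻¹ * (x 0 - m1 0)) * (‖x - m0‖⁻¹ * (x 1 - m0 1)) -
           (‖x - m1‖⁻¹ * (x 1 - m1 1)) * (‖x - m0‖⁻¹ * (x 0 - m0 0))) := by
        simp only [cross_def, d_def, PiLp.sub_apply]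
        field_simp
      have hBeq : cross (d m2 x) (d m0 x) = (‖x - m2‖ * ‖x - m0‖) *
          ((‖x - m2‖⁻¹ * (x 0 - m2 0)) * (‖x - m0‖⁻¹ * (x 1 - m0 1)) -
           (‖x - m2‖⁻¹ * (x 1 - m2 1)) * (‖x - m0‖⁻¹ * (x 0 - m0 0))) := by
        simp only [cross_def, d_def, PiLp.sub_apply]
        field_simp
      have hCeq : cross (d m2 x) (d m1 x) = (‖x - m2‖ * ‖x - m1‖) *
          ((‖x - m2‖⁻¹ * (x 0 - m2 0)) * (‖x - m1‖⁻¹ * (x 1 - m1 1)) -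
           (‖x - m2‖⁻¹ * (x 1 - m2 1)) * (‖x - m1‖⁻¹ * (x 0 - m1 0))) := by
        simp only [cross_def, d_def, PiLp.sub_apply]
        field_simp
      have hFeq : cross (nd m1 x) (nd m0 x) - cross (nd m2 x) (nd m0 x) +
          cross (nd m2 x) (nd m1 x) =
          ((‖x - m1‖⁻¹ * (x 0 - m1 0)) * (‖x - m0‖⁻¹ * (x 1 - m0 1)) -
           (‖x - m1‖⁻¹ * (x 1 - m1 1)) * (‖x - m0‖⁻¹ * (x 0 - m0 0))) -
          ((‖x - m2‖⁻¹ * (x 0 - m2 0)) * (‖x - m0‖⁻¹ * (x 1 - m0 1)) -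
           (‖x - m2‖⁻¹ * (x 1 - m2 1)) * (‖x - m0‖⁻¹ * (x 0 - m0 0))) +
          ((‖x - m2‖⁻¹ * (x 0 - m2 0)) * (‖x - m1‖⁻¹ * (x 1 - m1 1)) -
           (‖x - m2‖⁻¹ * (x 1 - m2 1)) * (‖x - m1‖⁻¹ * (x 0 - m1 0))) := by
        simp only [cross_def, nd_def, PiLp.smul_apply, PiLp.sub_apply, smul_eq_mul]
      by_cases hpq : ‖x - m0‖⁻¹ * (x 0 - m0 0) = ‖x - m1‖⁻¹ * (x 0 - m1 0) ∧
          ‖x - m0‖⁻¹ * (x 1 - m0 1) = ‖x - m1‖⁻¹ * (x 1 - m1 1)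
      · have hk : (0:ℝ) < ‖x - m0‖ * ‖x - m1‖⁻¹ := by positivity
        have hveq : x - m0 = (‖x - m0‖ * ‖x - m1‖⁻¹) • (x - m1) := by
          apply e2ext
          · simp only [PiLp.sub_apply, PiLp.smul_apply, smul_eq_mul]
            exact scale_eq hnu' hpq.1
          · simp only [PiLp.sub_apply, PiLp.smul_apply, smul_eq_mul]
            exact scale_eq hnu' hpq.2
        rcases mem_hl_union hm01 hk hveq with h | h
        · exact Or.inl (Or.inl (Or.inl (Or.inl (Or.inl h))))
        · exact Or.inl (Or.inl (Or.inl (Or.inl (Or.inr h))))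
      by_cases hprr : ‖x - m0‖⁻¹ * (x 0 - m0 0) = ‖x - m2‖⁻¹ * (x 0 - m2 0) ∧
          ‖x - m0‖⁻¹ * (x 1 - m0 1) = ‖x - m2‖⁻¹ * (x 1 - m2 1)
      · have hk : (0:ℝ) < ‖x - m0‖ * ‖x - m2‖⁻¹ := by positivity
        have hveq : x - m0 = (‖x - m0‖ * ‖x - m2‖⁻¹) • (x - m2) := by
          apply e2ext
          · simp only [PiLp.sub_apply, PiLp.smul_apply, smul_eq_mul]
            exact scale_eq hnu' hprr.1
          · simp only [PiLp.sub_apply, PiLp.smul_apply, smul_eq_mul]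
            exact scale_eq hnu' hprr.2
        rcases mem_hl_union hm02 hk hveq with h | h
        · exact Or.inl (Or.inl (Or.inl (Or.inr h)))
        · exact Or.inl (Or.inl (Or.inr h))
      by_cases hqrr : ‖x - m1‖⁻¹ * (x 0 - m1 0) = ‖x - m2‖⁻¹ * (x 0 - m2 0) ∧
          ‖x - m1‖⁻¹ * (x 1 - m1 1) = ‖x - m2‖⁻¹ * (x 1 - m2 1)
      · have hk : (0:ℝ) < ‖x - m1‖ * ‖x - m2‖⁻¹ := by positivity
        have hveq : x - m1 = (‖x - m1‖ * ‖x - m2‖⁻¹) • (x - m2) := by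
          apply e2ext
          · simp only [PiLp.sub_apply, PiLp.smul_apply, smul_eq_mul]
            exact scale_eq hnv' hqrr.1
          · simp only [PiLp.sub_apply, PiLp.smul_apply, smul_eq_mul]
            exact scale_eq hnv' hqrr.2
        rcases mem_hl_union hm12 hk hveq with h | h
        · exact Or.inl (Or.inr h)
        · exact Or.inr h
      · exfalso
        have hFge : 0 ≤ ((‖x - m1‖⁻¹ * (x 0 - m1 0)) * (‖x - m0‖⁻¹ * (x 1 - m0 1)) -
              (‖x - m1‖⁻¹ * (x 1 - m1 1)) * (‖x - m0‖⁻¹ * (x 0 - m0 0))) -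
            ((‖x - m2‖⁻¹ * (x 0 - m2 0)) * (‖x - m0‖⁻¹ * (x 1 - m0 1)) -
              (‖x - m2‖⁻¹ * (x 1 - m2 1)) * (‖x - m0‖⁻¹ * (x 0 - m0 0))) +
            ((‖x - m2‖⁻¹ * (x 0 - m2 0)) * (‖x - m1‖⁻¹ * (x 1 - m1 1)) -
              (‖x - m2‖⁻¹ * (x 1 - m2 1)) * (‖x - m1‖⁻¹ * (x 0 - m1 0))) := by
          by_contra hh
          push_neg at hh
          exact hxΩ ((hΩ x).2 ⟨hxS, by rw [hFeq]; exact hh⟩)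
        have hFne : ((‖x - m1‖⁻¹ * (x 0 - m1 0)) * (‖x - m0‖⁻¹ * (x 1 - m0 1)) -
              (‖x - m1‖⁻¹ * (x 1 - m1 1)) * (‖x - m0‖⁻¹ * (x 0 - m0 0))) -
            ((‖x - m2‖⁻¹ * (x 0 - m2 0)) * (‖x - m0‖⁻¹ * (x 1 - m0 1)) -
              (‖x - m2‖⁻¹ * (x 1 - m2 1)) * (‖x - m0‖⁻¹ * (x 0 - m0 0))) +
            ((‖x - m2‖⁻¹ * (x 0 - m2 0)) * (‖x - m1‖⁻¹ * (x 1 - m1 1)) -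
              (‖x - m2‖⁻¹ * (x 1 - m2 1)) * (‖x - m1‖⁻¹ * (x 0 - m1 0))) ≠ 0 := by
          intro h0
          obtain ⟨e1, e2⟩ := collinear_unit (‖x - m0‖⁻¹ * (x 0 - m0 0)) (‖x - m0‖⁻¹ * (x 1 - m0 1))
            (‖x - m1‖⁻¹ * (x 0 - m1 0)) (‖x - m1‖⁻¹ * (x 1 - m1 1))
            (‖x - m2‖⁻¹ * (x 0 - m2 0)) (‖x - m2‖⁻¹ * (x 1 - m2 1))
            hPu hQu hRu (by linear_combination h0) hprr hqrr
          exact hpq ⟨e1, e2⟩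
        rcases wedge_cover (‖x - m0‖⁻¹ * (x 0 - m0 0)) (‖x - m0‖⁻¹ * (x 1 - m0 1))
            (‖x - m1‖⁻¹ * (x 0 - m1 0)) (‖x - m1‖⁻¹ * (x 1 - m1 1))
            (‖x - m2‖⁻¹ * (x 0 - m2 0)) (‖x - m2‖⁻¹ * (x 1 - m2 1))
            hPu hQu hRu (lt_of_le_of_ne hFge (Ne.symm hFne)) with ⟨ha, hb⟩ | ⟨ha, hc⟩ | ⟨hb, hc⟩
        · exact hxΩ0 ((hΩ0 x).2 ⟨hxS,
            (by rw [hAeq]; exact mul_pos (mul_pos hnv hnu) ha),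
            (by rw [hBeq]; exact mul_neg_of_pos_of_neg (mul_pos hnw hnu) hb)⟩)
        · exact hxΩ1 ((hΩ1 x).2 ⟨hxS,
            (by rw [hAeq]; exact mul_pos (mul_pos hnv hnu) ha),
            (by rw [hCeq]; exact mul_pos (mul_pos hnw hnv) hc)⟩)
        · exact hxΩ2 ((hΩ2 x).2 ⟨hxS,
            (by rw [hBeq]; exact mul_neg_of_pos_of_neg (mul_pos hnw hnu) hb),
            (by rw [hCeq]; exact mul_pos (mul_pos hnw hnv) hc)⟩)
    · intro hray
      by_cases hxS : x ≠ m0 ∧ x ≠ m1 ∧ x ≠ m2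
      · rcases hray with ((((h|h)|h)|h)|h)|h
        · obtain ⟨t, ht, h1, h2⟩ := hl_decomp h
          have ht0 : t ≠ 0 := by
            intro h0; rw [h0, zero_smul] at h1; exact hxS.2.1 (sub_eq_zero.1 h1)
          obtain ⟨c1, c2, c3, c4⟩ := claim01 x (m1 - m0) (1 + t) t
            (by linarith [lt_of_le_of_ne ht (Ne.symm ht0)]) (lt_of_le_of_ne ht (Ne.symm ht0)) h2 h1
          exact ⟨⟨⟨c1, c2⟩, c3⟩, c4⟩
        · obtain ⟨t, ht, h1, h2⟩ := hl_decomp h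
          have ht0 : t ≠ 0 := by
            intro h0; rw [h0, zero_smul] at h1; exact hxS.1 (sub_eq_zero.1 h1)
          obtain ⟨c1, c2, c3, c4⟩ := claim01 x (m0 - m1) t (1 + t)
            (lt_of_le_of_ne ht (Ne.symm ht0)) (by linarith [lt_of_le_of_ne ht (Ne.symm ht0)]) h1 h2
          exact ⟨⟨⟨c1, c2⟩, c3⟩, c4⟩
        · obtain ⟨t, ht, h1, h2⟩ := hl_decomp h
          have ht0 : t ≠ 0 := by
            intro h0; rw [h0, zero_smul] at h1; exact hxS.2.2 (sub_eq_zero.1 h1)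
          obtain ⟨c1, c2, c3, c4⟩ := claim02 x (m2 - m0) (1 + t) t
            (by linarith [lt_of_le_of_ne ht (Ne.symm ht0)]) (lt_of_le_of_ne ht (Ne.symm ht0)) h2 h1
          exact ⟨⟨⟨c1, c2⟩, c3⟩, c4⟩
        · obtain ⟨t, ht, h1, h2⟩ := hl_decomp h
          have ht0 : t ≠ 0 := by
            intro h0; rw [h0, zero_smul] at h1; exact hxS.1 (sub_eq_zero.1 h1)
          obtain ⟨c1, c2, c3, c4⟩ := claim02 x (m0 - m2) t (1 + t)
            (lt_of_le_of_ne ht (Ne.symm ht0)) (by linarith [lt_of_le_of_ne ht (Ne.symm ht0)]) h1 h2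
          exact ⟨⟨⟨c1, c2⟩, c3⟩, c4⟩
        · obtain ⟨t, ht, h1, h2⟩ := hl_decomp h
          have ht0 : t ≠ 0 := by
            intro h0; rw [h0, zero_smul] at h1; exact hxS.2.2 (sub_eq_zero.1 h1)
          obtain ⟨c1, c2, c3, c4⟩ := claim12 x (m2 - m1) (1 + t) t
            (by linarith [lt_of_le_of_ne ht (Ne.symm ht0)]) (lt_of_le_of_ne ht (Ne.symm ht0)) h2 h1
          exact ⟨⟨⟨c1, c2⟩, c3⟩, c4⟩
        · obtain ⟨t, ht, h1, h2⟩ := hl_decomp h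
          have ht0 : t ≠ 0 := by
            intro h0; rw [h0, zero_smul] at h1; exact hxS.2.1 (sub_eq_zero.1 h1)
          obtain ⟨c1, c2, c3, c4⟩ := claim12 x (m1 - m2) t (1 + t)
            (lt_of_le_of_ne ht (Ne.symm ht0)) (by linarith [lt_of_le_of_ne ht (Ne.symm ht0)]) h1 h2
          exact ⟨⟨⟨c1, c2⟩, c3⟩, c4⟩
      · exact ⟨⟨⟨fun hx => hxS ((hΩ x).1 hx).1, fun hx => hxS ((hΩ0 x).1 hx).1⟩,
          fun hx => hxS ((hΩ1 x).1 hx).1⟩, fun hx => hxS ((hΩ2 x).1 hx).1⟩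
  constructor
  · simp only [← closure_union]
    rw [← dense_iff_closure_eq]
    intro x
    apply Metric.mem_closure_iff.2
    intro ε hε
    have hwnorm : (0:ℝ) < ‖(m1 - m0) + (m2 - m0)‖ + 1 := by positivity
    have hδ : 0 < ε / (‖(m1 - m0) + (m2 - m0)‖ + 1) := div_pos hε hwnorm
    have hw0 : ((m1 - m0) + (m2 - m0)) 0 = (m1 0 - m0 0) + (m2 0 - m0 0) := by
      simp [PiLp.add_apply, PiLp.sub_apply]
    have hw1 : ((m1 - m0) + (m2 - m0)) 1 = (m1 1 - m0 1) + (m2 1 - m0 1) := by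
      simp [PiLp.add_apply, PiLp.sub_apply]
    have hβ1 : (m1 0 - m0 0) * (((m1 - m0) + (m2 - m0)) 1) -
        (m1 1 - m0 1) * (((m1 - m0) + (m2 - m0)) 0) ≠ 0 := by
      rw [hw0, hw1]; intro h; nlinarith [hcr]
    have hβ2 : (m2 0 - m0 0) * (((m1 - m0) + (m2 - m0)) 1) -
        (m2 1 - m0 1) * (((m1 - m0) + (m2 - m0)) 0) ≠ 0 := by
      rw [hw0, hw1]; intro h; nlinarith [hcr]
    have hβ3 : (m2 0 - m1 0) * (((m1 - m0) + (m2 - m0)) 1) -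
        (m2 1 - m1 1) * (((m1 - m0) + (m2 - m0)) 0) ≠ 0 := by
      rw [hw0, hw1]; intro h; nlinarith [hcr]
    have hfin : ∀ (al be : ℝ), be ≠ 0 → Set.Finite {t : ℝ | al + t * be = 0} := by
      intro al be hbe
      apply Set.Finite.subset (Set.finite_singleton (-al / be))
      intro t ht
      simp only [Set.mem_setOf_eq] at ht
      simp only [Set.mem_singleton_iff]
      field_simp
      linarith
    have hfins : (({t : ℝ | ((m1 0 - m0 0) * (x 1 - m0 1) - (m1 1 - m0 1) * (x 0 - m0 0)) +
          t * ((m1 0 - m0 0) * (((m1 - m0) + (m2 - m0)) 1) -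
            (m1 1 - m0 1) * (((m1 - m0) + (m2 - m0)) 0)) = 0} ∪
        {t : ℝ | ((m2 0 - m0 0) * (x 1 - m0 1) - (m2 1 - m0 1) * (x 0 - m0 0)) +
          t * ((m2 0 - m0 0) * (((m1 - m0) + (m2 - m0)) 1) -
            (m2 1 - m0 1) * (((m1 - m0) + (m2 - m0)) 0)) = 0}) ∪
        {t : ℝ | ((m2 0 - m1 0) * (x 1 - m1 1) - (m2 1 - m1 1) * (x 0 - m1 0)) +
          t * ((m2 0 - m1 0) * (((m1 - m0) + (m2 - m0)) 1) -
            (m2 1 - m1 1) * (((m1 - m0) + (m2 - m0)) 0)) = 0}).Finite :=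
      Set.Finite.union (Set.Finite.union (hfin _ _ hβ1) (hfin _ _ hβ2)) (hfin _ _ hβ3)
    have hne := Set.Infinite.nonempty (Set.Infinite.diff (Set.Ioo_infinite hδ) hfins)
    obtain ⟨t, htI, htB⟩ := hne
    refine ⟨x + t • ((m1 - m0) + (m2 - m0)), ?_, ?_⟩
    · by_contra hc
      have hc' : x + t • ((m1 - m0) + (m2 - m0)) ∈ (Ω ∪ Ω0 ∪ Ω1 ∪ Ω2)ᶜ := hc
      rw [part2] at hc'
      rcases hc' with ((((h|h)|h)|h)|h)|h
      · obtain ⟨s, hs, hA1, hA2⟩ := hl_decomp h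
        have k0 := congrFun (congrArg WithLp.ofLp hA2) 0
        have k1 := congrFun (congrArg WithLp.ofLp hA2) 1
        simp only [PiLp.sub_apply, PiLp.add_apply, PiLp.smul_apply, smul_eq_mul] at k0 k1
        exact htB (Set.mem_union_left _ (Set.mem_union_left _
          (by simp only [Set.mem_setOf_eq]; rw [hw0, hw1]; linear_combination (m1 0 - m0 0) * k1 - (m1 1 - m0 1) * k0)))
      · obtain ⟨s, hs, hA1, hA2⟩ := hl_decomp h
        have k0 := congrFun (congrArg WithLp.ofLp hA1) 0
        have k1 := congrFun (congrArg WithLp.ofLp hA1) 1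
        simp only [PiLp.sub_apply, PiLp.add_apply, PiLp.smul_apply, smul_eq_mul] at k0 k1
        exact htB (Set.mem_union_left _ (Set.mem_union_left _
          (by simp only [Set.mem_setOf_eq]; rw [hw0, hw1]; linear_combination (m1 0 - m0 0) * k1 - (m1 1 - m0 1) * k0)))
      · obtain ⟨s, hs, hA1, hA2⟩ := hl_decomp h
        have k0 := congrFun (congrArg WithLp.ofLp hA2) 0
        have k1 := congrFun (congrArg WithLp.ofLp hA2) 1
        simp only [PiLp.sub_apply, PiLp.add_apply, PiLp.smul_apply, smul_eq_mul] at k0 k1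
        exact htB (Set.mem_union_left _ (Set.mem_union_right _
          (by simp only [Set.mem_setOf_eq]; rw [hw0, hw1]; linear_combination (m2 0 - m0 0) * k1 - (m2 1 - m0 1) * k0)))
      · obtain ⟨s, hs, hA1, hA2⟩ := hl_decomp h
        have k0 := congrFun (congrArg WithLp.ofLp hA1) 0
        have k1 := congrFun (congrArg WithLp.ofLp hA1) 1
        simp only [PiLp.sub_apply, PiLp.add_apply, PiLp.smul_apply, smul_eq_mul] at k0 k1
        exact htB (Set.mem_union_left _ (Set.mem_union_right _
          (by simp only [Set.mem_setOf_eq]; rw [hw0, hw1]; linear_combination (m2 0 - m0 0) * k1 - (m2 1 - m0 1) * k0)))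
      · obtain ⟨s, hs, hA1, hA2⟩ := hl_decomp h
        have k0 := congrFun (congrArg WithLp.ofLp hA2) 0
        have k1 := congrFun (congrArg WithLp.ofLp hA2) 1
        simp only [PiLp.sub_apply, PiLp.add_apply, PiLp.smul_apply, smul_eq_mul] at k0 k1
        exact htB (Set.mem_union_right _
          (by simp only [Set.mem_setOf_eq]; rw [hw0, hw1]; linear_combination (m2 0 - m1 0) * k1 - (m2 1 - m1 1) * k0))
      · obtain ⟨s, hs, hA1, hA2⟩ := hl_decomp h
        have k0 := congrFun (congrArg WithLp.ofLp hA1) 0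
        have k1 := congrFun (congrArg WithLp.ofLp hA1) 1
        simp only [PiLp.sub_apply, PiLp.add_apply, PiLp.smul_apply, smul_eq_mul] at k0 k1
        exact htB (Set.mem_union_right _
          (by simp only [Set.mem_setOf_eq]; rw [hw0, hw1]; linear_combination (m2 0 - m1 0) * k1 - (m2 1 - m1 1) * k0))
    · have hd : dist x (x + t • ((m1 - m0) + (m2 - m0))) = t * ‖(m1 - m0) + (m2 - m0)‖ := by
        rw [dist_eq_norm, sub_add_cancel_left, norm_neg, norm_smul, Real.norm_eq_abs,
          abs_of_pos htI.1]
      rw [hd]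
      have h3 : t * (‖(m1 - m0) + (m2 - m0)‖ + 1) < ε := (lt_div_iff₀ hwnorm).1 htI.2
      nlinarith [htI.1]
  · exact part2
end
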